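/- Let n and k be positive integers with k dividing n, and set ℓ = n/k. On the vertex set V = {0,…,n−1}, define the simple graph H whose edge set is E₁ ∪ E₂ ∪ E₃ where: E₁ = {{i, i+k} : 0 ≤ i ≤ n−k−1}; E₂ = {{i, i + k·2^s} : s ≥ 1, k·2^s divides i, i + k·2^s ≤ n−1}; and E₃ = {{i, i+r} : i divisible by k, 1 ≤ r ≤ k−1, i + r ≤ n−1}. Then H is connected and there exists an absolute constant C > 0 such that the diameter of H is at most C·(1 + log₂(n/k)). -/
import Mathlib

open Classical

/-- The graph `H` of the lower-bound construction on vertex set `{0, …, n-1}`: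
`E₁`-edges `{i, i+k}`, `E₂`-shortcut edges `{i, i + k·2^s}` for `s ≥ 1` and
`k·2^s ∣ i`, and `E₃`-star edges `{i, i+r}` for `k ∣ i` and `1 ≤ r ≤ k-1`. -/
def pathsGraph (n k : ℕ) : SimpleGraph (Fin n) :=
  SimpleGraph.fromRel (fun i j =>
    ((j : ℕ) = (i : ℕ) + k) ∨
    (∃ s : ℕ, 1 ≤ s ∧ (k * 2 ^ s) ∣ (i : ℕ) ∧ (j : ℕ) = (i : ℕ) + k * 2 ^ s) ∨
    (k ∣ (i : ℕ) ∧ (i : ℕ) < (j : ℕ) ∧ (j : ℕ) < (i : ℕ) + k))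

lemma pg_adj {n k : ℕ} (hk : 0 < k) {a b : ℕ} (ha : a < n) (hb : b < n)
    (h : (b = a + k) ∨
      (∃ s : ℕ, 1 ≤ s ∧ (k * 2 ^ s) ∣ a ∧ b = a + k * 2 ^ s) ∨
      (k ∣ a ∧ a < b ∧ b < a + k)) :
    (pathsGraph n k).Adj ⟨a, ha⟩ ⟨b, hb⟩ := by
  have hab : a ≠ b := by
    rcases h with h | ⟨s, hs, _, h⟩ | ⟨_, h, _⟩
    · omega
    · have : 0 < k * 2 ^ s := by positivity
      omega
    · omega
  rw [pathsGraph, SimpleGraph.fromRel_adj]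
  refine ⟨by simp [Fin.ext_iff, hab], Or.inl ?_⟩
  simpa using h

/-- From `k*t` one can reach `k*(t+m)` in at most `Nat.size m` steps,
provided `2^(size m) ∣ t`. -/
lemma walk_exists (n k : ℕ) (hk : 0 < k) :
    ∀ m t : ℕ, 2 ^ (Nat.size m) ∣ t → ∀ (h1 : k * t < n) (h2 : k * (t + m) < n),
      ∃ p : (pathsGraph n k).Walk ⟨k * t, h1⟩ ⟨k * (t + m), h2⟩,
        p.length ≤ Nat.size m := by
  intro m
  induction m using Nat.strong_induction_on with
  | _ m ih =>
    intro t hdvd h1 h2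
    rcases Nat.eq_zero_or_pos m with rfl | hm
    · exact ⟨SimpleGraph.Walk.nil.copy rfl (by ext; simp), by simp⟩
    · set s := Nat.log 2 m with hs
      have h2s_le : 2 ^ s ≤ m := Nat.pow_log_le_self 2 hm.ne'
      have hlt : m < 2 ^ (s + 1) := Nat.lt_pow_succ_log_self (by norm_num) m
      have hsize_le : Nat.size m ≤ s + 1 := Nat.size_le.2 hlt
      have hsize_ge : s + 1 ≤ Nat.size m := by
        by_contra hc
        have : Nat.size m ≤ s := by omega
        have := Nat.size_le.1 this
        omega
      have hsize : Nat.size m = s + 1 := le_antisymm hsize_le hsize_ge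
      set m' := m - 2 ^ s with hm'
      have hm'lt : m' < 2 ^ s := by
        have : 2 ^ (s + 1) = 2 * 2 ^ s := by ring
        omega
      have hsize' : Nat.size m' ≤ s := Nat.size_le.2 hm'lt
      have hdvd_s : 2 ^ s ∣ t := dvd_trans (pow_dvd_pow 2 (by omega)) hdvd
      have hdvd' : 2 ^ (Nat.size m') ∣ t + 2 ^ s :=
        dvd_add (dvd_trans (pow_dvd_pow 2 hsize') hdvd_s)
          (pow_dvd_pow 2 hsize')
      have h1' : k * (t + 2 ^ s) < n :=
        lt_of_le_of_lt (Nat.mul_le_mul_left k (by omega)) h2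
      have h2' : k * ((t + 2 ^ s) + m') < n := by
        have : (t + 2 ^ s) + m' = t + m := by omega
        rw [this]; exact h2
      obtain ⟨p, hp⟩ := ih m' (by omega) (t + 2 ^ s) hdvd' h1' h2'
      have hadj : (pathsGraph n k).Adj ⟨k * t, h1⟩ ⟨k * (t + 2 ^ s), h1'⟩ := by
        apply pg_adj hk
        rcases Nat.eq_zero_or_pos s with hs0 | hs1
        · left; rw [hs0]; ring
        · right; left
          exact ⟨s, hs1, mul_dvd_mul_left k hdvd_s, by ring⟩
      have heq : (⟨k * ((t + 2 ^ s) + m'), h2'⟩ : Fin n) = ⟨k * (t + m), h2⟩ := by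
        ext; simp; omega
      refine ⟨(SimpleGraph.Walk.cons hadj p).copy rfl heq, ?_⟩
      rw [SimpleGraph.Walk.length_copy, SimpleGraph.Walk.length_cons]
      omega

/-- Every vertex is reachable from `0` by a short walk. -/
lemma walk_to_zero (n k : ℕ) (hk : 0 < k) (hn : 0 < n) (v : Fin n) :
    ∃ p : (pathsGraph n k).Walk ⟨0, hn⟩ v,
      p.length ≤ Nat.size ((v : ℕ) / k) + 1 := by
  set q := (v : ℕ) / k with hq
  set r := (v : ℕ) % k with hr
  have hvr : (v : ℕ) = k * q + r := (Nat.div_add_mod (v : ℕ) k).symm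
  have hrk : r < k := Nat.mod_lt _ hk
  have h1 : k * 0 < n := by simpa using hn
  have h2 : k * (0 + q) < n := by
    simp only [Nat.zero_add]
    calc k * q ≤ (v : ℕ) := by omega
    _ < n := v.isLt
  obtain ⟨p, hp⟩ := walk_exists n k hk q 0 (dvd_refl _ |>.trans (dvd_zero _)) h1 h2
  have h0 : (⟨k * 0, h1⟩ : Fin n) = ⟨0, hn⟩ := by ext; simp
  rcases Nat.eq_zero_or_pos r with hr0 | hr1
  · have hv : (⟨k * (0 + q), h2⟩ : Fin n) = v := by ext; simp; omega
    exact ⟨p.copy h0 hv, by simpa using hp.trans (by omega)⟩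
  · have hadj : (pathsGraph n k).Adj ⟨k * (0 + q), h2⟩ v := by
      have hb : (v : ℕ) < n := v.isLt
      have : (pathsGraph n k).Adj ⟨k * (0 + q), h2⟩ ⟨(v : ℕ), hb⟩ := by
        apply pg_adj hk
        right; right
        simp only [Nat.zero_add]
        refine ⟨⟨q, rfl⟩, by omega, by omega⟩
      simpa using this
    refine ⟨(p.concat hadj).copy h0 rfl, ?_⟩
    rw [SimpleGraph.Walk.length_copy, SimpleGraph.Walk.length_concat]
    omega

lemma size_le_logb {q ℓ : ℕ} (hq : q < ℓ) (hℓ : 1 ≤ ℓ) :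
    (Nat.size q : ℝ) ≤ 1 + Real.logb 2 (ℓ : ℝ) := by
  have hL : 0 ≤ Real.logb 2 (ℓ : ℝ) :=
    Real.logb_nonneg one_lt_two (by exact_mod_cast hℓ)
  rcases Nat.eq_zero_or_pos q with rfl | hq1
  · simp [Nat.size_zero]; linarith
  · set j := Nat.size q - 1 with hj
    have hsz1 : 1 ≤ Nat.size q := by
      by_contra hc
      have : Nat.size q = 0 := by omega
      have := Nat.size_le.1 (le_of_eq this)
      simp at this; omega
    have h2j : 2 ^ j ≤ q := by
      by_contra hc
      have := Nat.size_le.2 (by omega : q < 2 ^ j)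
      omega
    have hjle : (j : ℝ) ≤ Real.logb 2 (ℓ : ℝ) := by
      have h1 : ((2 : ℝ) ^ j : ℝ) ≤ (ℓ : ℝ) := by
        have : (2 : ℕ) ^ j ≤ ℓ := by omega
        exact_mod_cast this
      have h2 : Real.logb 2 ((2 : ℝ) ^ j) ≤ Real.logb 2 (ℓ : ℝ) :=
        Real.logb_le_logb_of_le one_lt_two (by positivity) h1
      rwa [Real.logb_pow, Real.logb_self_eq_one (by norm_num), mul_one] at h2
    have : (Nat.size q : ℝ) = (j : ℝ) + 1 := by
      have : Nat.size q = j + 1 := by omega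
      rw [this]; push_cast; ring
    rw [this]; linarith

/-- The graph `H` is connected and has diameter `O(1 + log₂(n/k))`
for an absolute constant. -/
theorem statement13 :
    ∃ C : ℝ, 0 < C ∧ ∀ n k : ℕ, 0 < k → k ∣ n → 0 < n →
      (pathsGraph n k).Connected ∧
      ∀ u v : Fin n,
        ((pathsGraph n k).dist u v : ℝ) ≤ C * (1 + Real.logb 2 ((n : ℝ) / k)) := by
  refine ⟨4, by norm_num, fun n k hk hdvd hn => ?_⟩
  haveI : NeZero n := ⟨hn.ne'⟩
  set ℓ := n / k with hℓdef
  have hn_eq : ℓ * k = n := Nat.div_mul_cancel hdvd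
  have hℓ1 : 1 ≤ ℓ := by
    rcases Nat.eq_zero_or_pos ℓ with h | h
    · rw [h] at hn_eq; simp at hn_eq; omega
    · exact h
  have hreach : ∀ v : Fin n, (pathsGraph n k).Reachable ⟨0, hn⟩ v := fun v =>
    ⟨(walk_to_zero n k hk hn v).choose⟩
  have hconn : (pathsGraph n k).Connected := by
    refine ⟨fun u v => ((hreach u).symm.trans (hreach v))⟩
  refine ⟨hconn, fun u v => ?_⟩
  have hcast : ((n : ℝ) / k) = (ℓ : ℝ) := by
    have : (ℓ : ℝ) * k = n := by exact_mod_cast hn_eq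
    field_simp [show (k : ℝ) ≠ 0 from Nat.cast_ne_zero.2 hk.ne']
    linarith
  rw [hcast]
  set L := Real.logb 2 (ℓ : ℝ) with hLdef
  have hL : 0 ≤ L := Real.logb_nonneg one_lt_two (by exact_mod_cast hℓ1)
  have key : ∀ w : Fin n, ((pathsGraph n k).dist ⟨0, hn⟩ w : ℝ) ≤ 2 + L := by
    intro w
    obtain ⟨p, hp⟩ := walk_to_zero n k hk hn w
    have hd : (pathsGraph n k).dist ⟨0, hn⟩ w ≤ Nat.size ((w : ℕ) / k) + 1 :=
      le_trans (SimpleGraph.dist_le p) hp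
    have hq : (w : ℕ) / k < ℓ := by
      rw [Nat.div_lt_iff_lt_mul hk]
      have := w.isLt
      omega
    have hs := size_le_logb hq hℓ1
    calc ((pathsGraph n k).dist ⟨0, hn⟩ w : ℝ)
        ≤ (Nat.size ((w : ℕ) / k) : ℝ) + 1 := by exact_mod_cast hd
      _ ≤ 2 + L := by linarith
  have htri : (pathsGraph n k).dist u v ≤
      (pathsGraph n k).dist u ⟨0, hn⟩ + (pathsGraph n k).dist ⟨0, hn⟩ v :=
    hconn.dist_triangle
  have hu : ((pathsGraph n k).dist u ⟨0, hn⟩ : ℝ) ≤ 2 + L := by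
    rw [SimpleGraph.dist_comm]; exact key u
  have hv := key v
  have : ((pathsGraph n k).dist u v : ℝ) ≤
      ((pathsGraph n k).dist u ⟨0, hn⟩ : ℝ) + ((pathsGraph n k).dist ⟨0, hn⟩ v : ℝ) := by
    exact_mod_cast htri
  nlinarith
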